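/- Let A = ℂ[X_1^{±1},…,X_N^{±1}, p_1,…,p_N]^{S_N} with the Poisson bracket determined by {p_j, X_i} = δ_{ij} X_i, {X_i,X_j} = 0 = {p_i,p_j}. Then A is generated as a Poisson algebra by ℂ[X_1^{±1},…,X_N^{±1}]^{S_N} together with H_0 = ∑_i p_i². In particular, F_{r,s} := ∑_i X_i^r p_i^s lies in the Poisson subalgebra generated by these elements, via F_{r,s} = (1/2r){H_0, F_{r,s−1}} for r ≠ 0 and F_{0,s} = (1/(s+1)){F_{−1,s+1}, F_{1,0}}. -/

import Mathlib

/- STATEMENT 7: Let A = ℂ[X_1^{±1},…,X_N^{±1}, p_1,…,p_N]^{S_N} with the Poisson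
bracket determined by {p_j, X_i} = δ_{ij}X_i, {X_i,X_j} = 0 = {p_i,p_j}.
Then A is generated as a Poisson algebra by ℂ[X^{±1}]^{S_N} (generated by the
power sums ∑_i X_i^r, r ∈ ℤ) together with H_0 = ∑_i p_i².

Model: L = the algebra with basis the monomials X^a p^b, a : Fin N → ℤ,
b : Fin N → ℕ, with the Poisson bracket given on monomials by
{X^a p^b, X^c p^d} = ∑_i (b_i c_i − a_i d_i) X^{a+c} p^{b+d−e_i};
S_N acts by permuting the variables.  The claim: every S_N-invariant element of
L lies in any subalgebra closed under the bracket which contains H_0 and all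
power sums ∑_i X_i^r (r ∈ ℤ). -/

noncomputable section

variable (N : ℕ)

abbrev PoisAlg (N : ℕ) := AddMonoidAlgebra ℂ ((Fin N → ℤ) × (Fin N → ℕ))

/-- Poisson bracket of two monomials -/
noncomputable def brMono {N : ℕ} (m₁ m₂ : (Fin N → ℤ) × (Fin N → ℕ)) : PoisAlg N :=
  ∑ i : Fin N,
    (((m₁.2 i : ℤ) * m₂.1 i - m₁.1 i * (m₂.2 i : ℤ) : ℤ) : ℂ) •
      (AddMonoidAlgebra.single (m₁.1 + m₂.1, m₁.2 + m₂.2 - Pi.single i 1) (1 : ℂ) : PoisAlg N)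

/-- the Poisson bracket on L, extended bilinearly from monomials -/
noncomputable def pbr {N : ℕ} : PoisAlg N →ₗ[ℂ] PoisAlg N →ₗ[ℂ] PoisAlg N :=
  (Finsupp.lsum ℂ (fun m₁ => LinearMap.toSpanSingleton ℂ _
    ((Finsupp.lsum ℂ (fun m₂ => LinearMap.toSpanSingleton ℂ (PoisAlg N) (brMono m₁ m₂))) ∘ₗ
      (AddMonoidAlgebra.coeffLinearEquiv ℂ).toLinearMap))) ∘ₗ
    (AddMonoidAlgebra.coeffLinearEquiv ℂ).toLinearMap

/-- the power sum ∑_i X_i^r, r ∈ ℤ -/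
noncomputable def psum {N : ℕ} (r : ℤ) : PoisAlg N :=
  ∑ i : Fin N, (AddMonoidAlgebra.single ((Pi.single i r : Fin N → ℤ), (0 : Fin N → ℕ)) (1 : ℂ) : PoisAlg N)

/-- H_0 = ∑_i p_i² -/
noncomputable def H0 {N : ℕ} : PoisAlg N :=
  ∑ i : Fin N, (AddMonoidAlgebra.single ((0 : Fin N → ℤ), (Pi.single i 2 : Fin N → ℕ)) (1 : ℂ) : PoisAlg N)

/-- the action of a permutation σ ∈ S_N on L -/
noncomputable def permAct {N : ℕ} (σ : Equiv.Perm (Fin N)) : PoisAlg N →ₗ[ℂ] PoisAlg N :=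
  AddMonoidAlgebra.mapDomainLinearMap ℂ ℂ (fun m : (Fin N → ℤ) × (Fin N → ℕ) => (fun j => m.1 (σ.symm j), fun j => m.2 (σ.symm j)))

namespace St7

abbrev M (N : ℕ) := (Fin N → ℤ) × (Fin N → ℕ)

variable {N : ℕ}

def tau (σ : Equiv.Perm (Fin N)) (m : M N) : M N :=
  (fun j => m.1 (σ.symm j), fun j => m.2 (σ.symm j))

lemma permAct_single (σ : Equiv.Perm (Fin N)) (m : M N) (c : ℂ) :
    permAct σ (AddMonoidAlgebra.single m c) = AddMonoidAlgebra.single (tau σ m) c :=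
  AddMonoidAlgebra.mapDomainLinearMap_single ..

lemma tau_add (σ : Equiv.Perm (Fin N)) (m n : M N) :
    tau σ (m + n) = tau σ m + tau σ n := rfl

lemma tau_tau (σ π : Equiv.Perm (Fin N)) (m : M N) :
    tau σ (tau π m) = tau (σ * π) m := rfl

lemma tau_single (σ : Equiv.Perm (Fin N)) (j : Fin N) (r : ℤ) (s : ℕ) :
    tau σ ((Pi.single j r, Pi.single j s) : M N) = (Pi.single (σ j) r, Pi.single (σ j) s) := by
  refine Prod.ext ?_ ?_ <;> funext k <;>
    simp only [tau, Pi.single_apply, Equiv.symm_apply_eq]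

/-- orbit sum (with multiplicity) -/
noncomputable def S (m : M N) : PoisAlg N :=
  ∑ σ : Equiv.Perm (Fin N), AddMonoidAlgebra.single (tau σ m) (1 : ℂ)

lemma S_tau (π : Equiv.Perm (Fin N)) (m : M N) : S (tau π m) = S m := by
  unfold S
  refine Fintype.sum_equiv (Equiv.mulRight π) _ _ (fun σ => ?_)
  rw [tau_tau]; rfl

lemma pbr_single_single (m₁ m₂ : M N) :
    pbr (AddMonoidAlgebra.single m₁ (1 : ℂ)) (AddMonoidAlgebra.single m₂ (1 : ℂ)) = brMono m₁ m₂ := by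
  have h1 : pbr (AddMonoidAlgebra.single m₁ (1 : ℂ))
      = LinearMap.toSpanSingleton ℂ (PoisAlg N →ₗ[ℂ] PoisAlg N)
          ((Finsupp.lsum ℂ fun m₂ => LinearMap.toSpanSingleton ℂ (PoisAlg N) (brMono m₁ m₂)) ∘ₗ
            (AddMonoidAlgebra.coeffLinearEquiv ℂ).toLinearMap) 1 :=
    Finsupp.lsum_single (S := ℂ) _ _ _
  rw [h1, LinearMap.toSpanSingleton_apply, one_smul]
  exact (Finsupp.lsum_single (S := ℂ) _ _ _).trans
    (by rw [LinearMap.toSpanSingleton_apply, one_smul])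


/-- F_{r,s} = ∑_i X_i^r p_i^s -/
noncomputable def F (r : ℤ) (s : ℕ) : PoisAlg N :=
  ∑ i : Fin N, AddMonoidAlgebra.single ((Pi.single i r, Pi.single i s) : M N) (1 : ℂ)

lemma psum_eq (r : ℤ) : (psum r : PoisAlg N) = F r 0 := by
  unfold psum F; simp

lemma single_exp (i : Fin N) (s : ℕ) :
    (Pi.single i 2 + Pi.single i s - Pi.single i 1 : Fin N → ℕ) = Pi.single i (s + 1) := by
  funext t
  by_cases h : t = i
  · subst h; simp [Pi.single_apply]; omega
  · simp [Pi.single_apply, h]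

lemma brMono_H0 (j i : Fin N) (r : ℤ) (s : ℕ) :
    brMono ((0 : Fin N → ℤ), (Pi.single j 2 : Fin N → ℕ)) (Pi.single i r, Pi.single i s)
      = if i = j then ((2 * r : ℤ) : ℂ) •
          AddMonoidAlgebra.single ((Pi.single i r, Pi.single i (s + 1)) : M N) (1 : ℂ) else 0 := by
  unfold brMono
  by_cases h : i = j
  · subst h
    rw [if_pos rfl]
    rw [Finset.sum_eq_single i]
    · simp only [Pi.single_eq_same, Pi.zero_apply, zero_mul, sub_zero, zero_add]
      rw [single_exp]
      norm_num [mul_comm]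
    · intro k _ hk
      simp [Pi.single_apply, hk]
    · simp
  · rw [if_neg h]
    refine Finset.sum_eq_zero fun k _ => ?_
    by_cases hk : k = i
    · subst hk
      simp [Pi.single_apply, h]
    · simp [Pi.single_apply, hk]

lemma sub_single_one (i : Fin N) (s : ℕ) :
    (Pi.single i (s + 1) + (0 : Fin N → ℕ) - Pi.single i 1 : Fin N → ℕ) = Pi.single i s := by
  funext t
  by_cases h : t = i
  · subst h; simp [Pi.single_apply]
  · simp [Pi.single_apply, h]

lemma brMono_F2 (j i : Fin N) (s : ℕ) :
    brMono ((Pi.single j (-1 : ℤ) : Fin N → ℤ), (Pi.single j (s + 1) : Fin N → ℕ))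
        ((Pi.single i (1 : ℤ) : Fin N → ℤ), (0 : Fin N → ℕ))
      = if i = j then ((s + 1 : ℕ) : ℂ) •
          AddMonoidAlgebra.single (((0 : Fin N → ℤ), Pi.single i s) : M N) (1 : ℂ) else 0 := by
  unfold brMono
  by_cases h : i = j
  · subst h
    rw [Finset.sum_eq_single i]
    · rw [if_pos rfl]
      have e1 : (Pi.single i (-1 : ℤ) + Pi.single i (1 : ℤ) : Fin N → ℤ) = 0 := by
        rw [← Pi.single_add]; norm_num
      simp only [Pi.single_eq_same, Pi.zero_apply, mul_one, Nat.cast_zero, mul_zero,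
        sub_zero, e1, sub_single_one]
      push_cast
      ring_nf
    · intro k _ hk
      simp [Pi.single_apply, hk]
    · simp
  · rw [if_neg h]
    refine Finset.sum_eq_zero fun k _ => ?_
    by_cases hk : k = i
    · subst hk
      simp [Pi.single_apply, h]
    · simp [Pi.single_apply, hk]


lemma pbr_H0_F (r : ℤ) (s : ℕ) :
    pbr (H0 : PoisAlg N) (F r s) = ((2 * r : ℤ) : ℂ) • F r (s + 1) := by
  have h1 : pbr (H0 : PoisAlg N) (F r s)
      = ∑ i : Fin N, ∑ j : Fin N,
          pbr (AddMonoidAlgebra.single (((0 : Fin N → ℤ), Pi.single j 2) : M N) (1 : ℂ))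
            (AddMonoidAlgebra.single ((Pi.single i r, Pi.single i s) : M N) (1 : ℂ)) := by
    unfold H0 F
    rw [map_sum]
    refine Finset.sum_congr rfl fun i _ => ?_
    rw [map_sum pbr, LinearMap.sum_apply]
  rw [h1]
  simp_rw [pbr_single_single, brMono_H0]
  rw [Finset.sum_congr rfl fun i (_ : i ∈ Finset.univ) => Finset.sum_ite_eq Finset.univ i _]
  simp only [Finset.mem_univ, if_true]
  rw [F, Finset.smul_sum]

lemma pbr_F2 (s : ℕ) :
    pbr (F (-1) (s + 1) : PoisAlg N) (F 1 0) = ((s + 1 : ℕ) : ℂ) • F 0 s := by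
  have h1 : pbr (F (-1) (s + 1) : PoisAlg N) (F 1 0)
      = ∑ i : Fin N, ∑ j : Fin N,
          pbr (AddMonoidAlgebra.single ((Pi.single j (-1 : ℤ), Pi.single j (s + 1)) : M N) (1 : ℂ))
            (AddMonoidAlgebra.single ((Pi.single i (1 : ℤ), (0 : Fin N → ℕ)) : M N) (1 : ℂ)) := by
    unfold F
    rw [map_sum]
    refine Finset.sum_congr rfl fun i _ => ?_
    rw [map_sum pbr, LinearMap.sum_apply]
    rw [show ((Pi.single i (0 : ℕ)) : Fin N → ℕ) = 0 from Pi.single_zero i]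
  rw [h1]
  simp_rw [pbr_single_single, brMono_F2]
  rw [Finset.sum_congr rfl fun i (_ : i ∈ Finset.univ) => Finset.sum_ite_eq Finset.univ i _]
  simp only [Finset.mem_univ, if_true]
  rw [F, Finset.smul_sum]
  refine Finset.sum_congr rfl fun j _ => ?_
  rw [show ((Pi.single j (0 : ℤ)) : Fin N → ℤ) = 0 from Pi.single_zero j]

lemma F_mem (B : Subalgebra ℂ (PoisAlg N))
    (hbr : ∀ a b : PoisAlg N, a ∈ B → b ∈ B → pbr a b ∈ B)
    (hps : ∀ r : ℤ, psum r ∈ B) (hH0 : (H0 : PoisAlg N) ∈ B) :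
    ∀ (s : ℕ) (r : ℤ), (F r s : PoisAlg N) ∈ B := by
  have key : ∀ (s : ℕ) (r : ℤ), r ≠ 0 → (F r s : PoisAlg N) ∈ B := by
    intro s
    induction s with
    | zero => intro r _; rw [← psum_eq]; exact hps r
    | succ s ih =>
        intro r hr
        have h2r : ((2 * r : ℤ) : ℂ) ≠ 0 := by
          simp only [ne_eq, Int.cast_eq_zero]
          omega
        have : (F r (s + 1) : PoisAlg N) = ((2 * r : ℤ) : ℂ)⁻¹ • pbr H0 (F r s) := by
          rw [pbr_H0_F, inv_smul_smul₀ h2r]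
        rw [this]
        exact B.smul_mem (hbr _ _ hH0 (ih r hr)) _
  intro s r
  by_cases hr : r = 0
  · subst hr
    have hs1 : ((s + 1 : ℕ) : ℂ) ≠ 0 := by
      simp only [ne_eq, Nat.cast_eq_zero]
      omega
    have : (F 0 s : PoisAlg N) = ((s + 1 : ℕ) : ℂ)⁻¹ • pbr (F (-1) (s + 1)) (F 1 0) := by
      rw [pbr_F2, inv_smul_smul₀ hs1]
    rw [this]
    exact B.smul_mem (hbr _ _ (key (s + 1) (-1) (by norm_num)) (key 0 1 one_ne_zero)) _
  · exact key s r hr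


lemma F_mul_S (r : ℤ) (s : ℕ) (m : M N) :
    (F r s : PoisAlg N) * S m
      = ∑ j : Fin N, S (m + ((Pi.single j r, Pi.single j s) : M N)) := by
  have lhs : (F r s : PoisAlg N) * S m
      = ∑ σ : Equiv.Perm (Fin N), ∑ i : Fin N,
          AddMonoidAlgebra.single ((tau σ m + (Pi.single i r, Pi.single i s) : M N)) (1 : ℂ) := by
    rw [F, S, Finset.sum_mul_sum]
    rw [Finset.sum_comm]
    refine Finset.sum_congr rfl fun σ _ => Finset.sum_congr rfl fun i _ => ?_
    rw [AddMonoidAlgebra.single_mul_single, one_mul, add_comm]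
  rw [lhs]
  have rhs : ∀ j : Fin N, S (m + ((Pi.single j r, Pi.single j s) : M N))
      = ∑ σ : Equiv.Perm (Fin N),
          AddMonoidAlgebra.single ((tau σ m + ((Pi.single (σ j) r, Pi.single (σ j) s) : M N))) (1 : ℂ) := by
    intro j
    unfold S
    refine Finset.sum_congr rfl fun σ _ => ?_
    rw [tau_add, tau_single]
  simp_rw [rhs]
  conv_rhs => rw [Finset.sum_comm]
  refine Finset.sum_congr rfl fun σ _ => ?_
  exact (Fintype.sum_equiv σ
    (fun j : Fin N => AddMonoidAlgebra.single
      ((tau σ m + ((Pi.single (σ j) r, Pi.single (σ j) s) : M N))) (1 : ℂ))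
    (fun i : Fin N => AddMonoidAlgebra.single
      ((tau σ m + ((Pi.single i r, Pi.single i s) : M N))) (1 : ℂ))
    (fun j => rfl)).symm


/-- number of indices where the monomial is nontrivial -/
noncomputable def wt (m : M N) : ℕ :=
  (Finset.univ.filter fun i => ¬(m.1 i = 0 ∧ m.2 i = 0)).card

lemma update_add_single (m : M N) (i₀ : Fin N) :
    ((Function.update m.1 i₀ 0 + Pi.single i₀ (m.1 i₀),
      Function.update m.2 i₀ 0 + Pi.single i₀ (m.2 i₀)) : M N) = m := by
  refine Prod.ext ?_ ?_ <;> funext k <;> by_cases h : k = i₀ <;>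
    simp [Function.update_apply, Pi.single_apply, h]

lemma swap_formula (m : M N) (i₀ j : Fin N) (hj : j ≠ i₀)
    (h1 : m.1 j = 0) (h2 : m.2 j = 0) :
    ((Function.update m.1 i₀ 0 + Pi.single j (m.1 i₀),
      Function.update m.2 i₀ 0 + Pi.single j (m.2 i₀)) : M N)
      = tau (Equiv.swap i₀ j) m := by
  have hsymm : (Equiv.swap i₀ j).symm = Equiv.swap i₀ j := Equiv.symm_swap i₀ j
  refine Prod.ext ?_ ?_ <;> funext k <;>
    simp only [tau, hsymm, Pi.add_apply] <;>
    rcases eq_or_ne k i₀ with rfl | hki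
  · rw [Equiv.swap_apply_left]
    simp [Function.update_apply, Pi.single_apply, Ne.symm hj, h1]
  · rcases eq_or_ne k j with rfl | hkj
    · rw [Equiv.swap_apply_right]
      simp [Function.update_apply, hj, h1]
    · rw [Equiv.swap_apply_of_ne_of_ne hki hkj]
      simp [Function.update_apply, hki, Pi.single_apply, hkj]
  · rw [Equiv.swap_apply_left]
    simp [Function.update_apply, Pi.single_apply, Ne.symm hj, h2]
  · rcases eq_or_ne k j with rfl | hkj
    · rw [Equiv.swap_apply_right]
      simp [Function.update_apply, hj, h2]
    · rw [Equiv.swap_apply_of_ne_of_ne hki hkj]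
      simp [Function.update_apply, hki, Pi.single_apply, hkj]

lemma S_mem (B : Subalgebra ℂ (PoisAlg N))
    (hbr : ∀ a b : PoisAlg N, a ∈ B → b ∈ B → pbr a b ∈ B)
    (hps : ∀ r : ℤ, psum r ∈ B) (hH0 : (H0 : PoisAlg N) ∈ B) :
    ∀ m : M N, S m ∈ B := by
  have hF := F_mem B hbr hps hH0
  suffices key : ∀ (k : ℕ) (m : M N), wt m ≤ k → S m ∈ B from fun m => key (wt m) m le_rfl
  intro k
  induction k with
  | zero =>
      intro m hm
      have hz : ∀ i, m.1 i = 0 ∧ m.2 i = 0 := by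
        intro i
        by_contra h
        have hi : i ∈ Finset.univ.filter fun i => ¬(m.1 i = 0 ∧ m.2 i = 0) :=
          Finset.mem_filter.mpr ⟨Finset.mem_univ i, h⟩
        have := Finset.card_eq_zero.mp (Nat.le_zero.mp hm)
        rw [this] at hi
        exact absurd hi (Finset.notMem_empty i)
      have hm0 : m = 0 :=
        Prod.ext (funext fun i => (hz i).1) (funext fun i => (hz i).2)
      have hS0 : S m = (Fintype.card (Equiv.Perm (Fin N))) • (1 : PoisAlg N) := by
        rw [hm0]
        unfold S
        have : ∀ σ : Equiv.Perm (Fin N),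
            AddMonoidAlgebra.single (tau σ (0 : M N)) (1 : ℂ) = (1 : PoisAlg N) := by
          intro σ
          rw [show tau σ (0 : M N) = 0 from rfl]
          exact (AddMonoidAlgebra.one_def).symm
        rw [Finset.sum_congr rfl fun σ _ => this σ, Finset.sum_const, Finset.card_univ]
      rw [hS0]
      exact nsmul_mem B.one_mem _
  | succ k ih =>
      intro m hm
      by_cases hk : wt m ≤ k
      · exact ih m hk
      obtain ⟨i₀, hi₀⟩ : ∃ i₀, i₀ ∈ Finset.univ.filter fun i => ¬(m.1 i = 0 ∧ m.2 i = 0) := by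
        have : 0 < wt m := by omega
        exact Finset.card_pos.mp this
      set r := m.1 i₀ with hr
      set s := m.2 i₀ with hs
      set m' : M N := (Function.update m.1 i₀ 0, Function.update m.2 i₀ 0) with hm'
      have hfil : (Finset.univ.filter fun i => ¬(m'.1 i = 0 ∧ m'.2 i = 0))
          ⊆ (Finset.univ.filter fun i => ¬(m.1 i = 0 ∧ m.2 i = 0)).erase i₀ := by
        intro i hi
        rw [Finset.mem_filter] at hi
        have hne : i ≠ i₀ := by
          rintro rfl
          exact hi.2 (by simp [hm'])
        refine Finset.mem_erase.mpr ⟨hne, Finset.mem_filter.mpr ⟨Finset.mem_univ i, ?_⟩⟩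
        simpa [hm', Function.update_apply, hne] using hi.2
      have hwt' : wt m' ≤ k := by
        have h1 := Finset.card_le_card hfil
        have h2 : ((Finset.univ.filter fun i => ¬(m.1 i = 0 ∧ m.2 i = 0)).erase i₀).card
            = wt m - 1 := Finset.card_erase_of_mem hi₀
        unfold wt at *
        omega
      have hSm' : S m' ∈ B := ih m' hwt'
      have hmain := F_mul_S r s m'
      set T : Finset (Fin N) := Finset.univ.filter fun j => m'.1 j = 0 ∧ m'.2 j = 0 with hT
      have hsplit : ∑ j : Fin N, S (m' + ((Pi.single j r, Pi.single j s) : M N))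
          = (∑ j ∈ T, S (m' + ((Pi.single j r, Pi.single j s) : M N)))
            + ∑ j ∈ Finset.univ.filter (fun j => ¬(m'.1 j = 0 ∧ m'.2 j = 0)),
                S (m' + ((Pi.single j r, Pi.single j s) : M N)) :=
        (Finset.sum_filter_add_sum_filter_not Finset.univ _ _).symm
      have hin : ∀ j ∈ T, S (m' + ((Pi.single j r, Pi.single j s) : M N)) = S m := by
        intro j hj
        rw [Finset.mem_filter] at hj
        by_cases hji : j = i₀
        · subst hji
          have : m' + ((Pi.single j r, Pi.single j s) : M N) = m := update_add_single m j
          rw [this]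
        · have : m' + ((Pi.single j r, Pi.single j s) : M N) = tau (Equiv.swap i₀ j) m :=
            swap_formula m i₀ j hji
              (by simpa [hm', Function.update_apply, hji] using hj.2.1)
              (by simpa [hm', Function.update_apply, hji] using hj.2.2)
          rw [this, S_tau]
      have hout : ∀ j ∈ Finset.univ.filter (fun j => ¬(m'.1 j = 0 ∧ m'.2 j = 0)),
          S (m' + ((Pi.single j r, Pi.single j s) : M N)) ∈ B := by
        intro j hj
        rw [Finset.mem_filter] at hj
        refine ih _ ?_
        refine le_trans (Finset.card_le_card ?_) hwt'
        intro i hi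
        rw [Finset.mem_filter] at hi ⊢
        refine ⟨Finset.mem_univ i, ?_⟩
        by_cases hij : i = j
        · subst hij; exact hj.2
        · simpa [Prod.fst_add, Prod.snd_add, Pi.single_apply, hij] using hi.2
      have hTcard : 0 < T.card := by
        refine Finset.card_pos.mpr ⟨i₀, ?_⟩
        rw [hT, Finset.mem_filter]
        exact ⟨Finset.mem_univ i₀, by simp [hm']⟩
      have hsum_in : ∑ j ∈ T, S (m' + ((Pi.single j r, Pi.single j s) : M N))
          = T.card • S m := by
        rw [Finset.sum_congr rfl hin, Finset.sum_const]
      have hmem : (T.card : ℂ) • S m ∈ B := by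
        have heq : (T.card : ℂ) • S m
            = F r s * S m' - ∑ j ∈ Finset.univ.filter (fun j => ¬(m'.1 j = 0 ∧ m'.2 j = 0)),
                S (m' + ((Pi.single j r, Pi.single j s) : M N)) := by
          rw [hmain, hsplit, hsum_in, Nat.cast_smul_eq_nsmul]
          abel
        rw [heq]
        exact B.sub_mem (B.mul_mem (hF s r) hSm') (Subalgebra.sum_mem B hout)
      have hc : (T.card : ℂ) ≠ 0 := Nat.cast_ne_zero.mpr hTcard.ne'
      have : S m = (T.card : ℂ)⁻¹ • ((T.card : ℂ) • S m) := (inv_smul_smul₀ hc _).symm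
      rw [this]
      exact B.smul_mem hmem _


lemma invariant_decomp (a : PoisAlg N) (ha : ∀ σ : Equiv.Perm (Fin N), permAct σ a = a) :
    (Fintype.card (Equiv.Perm (Fin N)) : ℂ) • a = ∑ m ∈ a.coeff.support, a.coeff m • S m := by
  have h1 : ∀ σ : Equiv.Perm (Fin N),
      permAct σ a = ∑ m ∈ a.coeff.support, AddMonoidAlgebra.single (tau σ m) (a.coeff m) := by
    intro σ
    conv_lhs => rw [← AddMonoidAlgebra.sum_coeff_single a]
    rw [Finsupp.sum, map_sum]
    exact Finset.sum_congr rfl fun m _ => permAct_single σ m (a.coeff m)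
  calc (Fintype.card (Equiv.Perm (Fin N)) : ℂ) • a
      = (Fintype.card (Equiv.Perm (Fin N))) • a := Nat.cast_smul_eq_nsmul ℂ _ a
    _ = ∑ _σ : Equiv.Perm (Fin N), a := by rw [Finset.sum_const, Finset.card_univ]
    _ = ∑ σ : Equiv.Perm (Fin N), permAct σ a :=
        Finset.sum_congr rfl fun σ _ => (ha σ).symm
    _ = ∑ σ : Equiv.Perm (Fin N), ∑ m ∈ a.coeff.support, AddMonoidAlgebra.single (tau σ m) (a.coeff m) :=
        Finset.sum_congr rfl fun σ _ => h1 σ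
    _ = ∑ m ∈ a.coeff.support, ∑ σ : Equiv.Perm (Fin N), AddMonoidAlgebra.single (tau σ m) (a.coeff m) :=
        Finset.sum_comm
    _ = ∑ m ∈ a.coeff.support, a.coeff m • S m := by
        refine Finset.sum_congr rfl fun m _ => ?_
        rw [S, Finset.smul_sum]
        exact Finset.sum_congr rfl fun σ _ => by rw [AddMonoidAlgebra.smul_single', mul_one]

end St7

theorem statement7 :
    ∀ B : Subalgebra ℂ (PoisAlg N),
      (∀ a b : PoisAlg N, a ∈ B → b ∈ B → pbr a b ∈ B) →
      (∀ r : ℤ, psum r ∈ B) → H0 ∈ B →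
      ∀ a : PoisAlg N, (∀ σ : Equiv.Perm (Fin N), permAct σ a = a) → a ∈ B := by
  intro B hbr hps hH0 a ha
  have hS := St7.S_mem B hbr hps hH0
  have hc : ((Fintype.card (Equiv.Perm (Fin N)) : ℂ)) ≠ 0 :=
    Nat.cast_ne_zero.mpr Fintype.card_ne_zero
  have : a = (Fintype.card (Equiv.Perm (Fin N)) : ℂ)⁻¹
      • ((Fintype.card (Equiv.Perm (Fin N)) : ℂ) • a) := (inv_smul_smul₀ hc a).symm
  rw [this, St7.invariant_decomp a ha]
  exact B.smul_mem (Subalgebra.sum_mem B fun m _ => B.smul_mem (hS m) _) _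


end
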